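/- Let n ∈ ℕ and let β : {1,…,n} → {1,…,n} → ℝ be such that β j j = 0 for every j. Then there exist real numbers α_1, …, α_n satisfying α k ≤ α j + β k j for all j, k ∈ {1,…,n} if and only if for every finite sequence of indices i_1, …, i_m ∈ {1,…,n} (repetitions allowed) one has β i_1 i_2 + β i_2 i_3 + ⋯ + β i_{m-1} i_m + β i_m i_1 ≥ 0. -/

import Mathlib

/-- Lemma 2.3 of the paper (existence part, finite index set): the system of inequalities
`α k ≤ α j + β k j` on `{1,…,n}` has a solution iff all cyclic sums of `β` are nonnegative. -/
theorem stmt_2 (n : ℕ) (β : Fin n → Fin n → ℝ) (hβ : ∀ j, β j j = 0) :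
    (∃ α : Fin n → ℝ, ∀ j k : Fin n, α k ≤ α j + β k j) ↔
    (∀ m : ℕ, 1 ≤ m → ∀ i : ℕ → Fin n,
      0 ≤ ∑ r ∈ Finset.range m, β (i r) (i ((r + 1) % m))) := by
  constructor
  · rintro ⟨α, hα⟩ m hm i
    obtain ⟨t, rfl⟩ : ∃ t, m = t + 1 := ⟨m - 1, by omega⟩
    have e1 : ∑ r ∈ Finset.range (t + 1), α (i ((r + 1) % (t + 1)))
        = ∑ r ∈ Finset.range (t + 1), α (i r) := by
      rw [Finset.sum_range_succ, Finset.sum_range_succ' (fun r => α (i r))]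
      congr 1
      · refine Finset.sum_congr rfl fun r hr => ?_
        have hr' := Finset.mem_range.mp hr
        rw [Nat.mod_eq_of_lt (by omega)]
      · rw [Nat.mod_self]
    have key : ∀ r ∈ Finset.range (t + 1),
        α (i r) - α (i ((r + 1) % (t + 1))) ≤ β (i r) (i ((r + 1) % (t + 1))) := by
      intro r _
      have := hα (i ((r + 1) % (t + 1))) (i r)
      linarith
    calc (0 : ℝ)
        = ∑ r ∈ Finset.range (t + 1), (α (i r) - α (i ((r + 1) % (t + 1)))) := by
          rw [Finset.sum_sub_distrib, e1, sub_self]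
      _ ≤ _ := Finset.sum_le_sum key
  · intro h
    rcases Nat.eq_zero_or_pos n with rfl | hn
    · exact ⟨Fin.elim0, fun j => j.elim0⟩
    set z : Fin n := ⟨0, hn⟩ with hz
    set W : (ℕ → Fin n) → ℕ → ℝ := fun v t => ∑ r ∈ Finset.range t, β (v (r + 1)) (v r)
      with hWdef
    have Wsplit : ∀ (w : ℕ → Fin n) (p q : ℕ), p ≤ q →
        W w q = (∑ r ∈ Finset.range p, β (w (r + 1)) (w r))
          + ∑ r ∈ Finset.Ico p q, β (w (r + 1)) (w r) := by
      intro w p q hpq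
      rw [hWdef]
      simp only
      rw [Finset.range_eq_Ico, Finset.range_eq_Ico]
      exact (Finset.sum_Ico_consecutive (fun r => β (w (r + 1)) (w r)) (Nat.zero_le p) hpq).symm
    set A : Fin n → Set ℝ :=
      fun k => {x | ∃ v : ℕ → Fin n, v 0 = z ∧ v n = k ∧ W v n = x} with hAdef
    have hA_ne : ∀ k, (A k).Nonempty := by
      intro k
      refine ⟨_, fun r => if r = n then k else z, ?_, by simp, rfl⟩
      have h0n : (0 : ℕ) ≠ n := by omega
      simp [h0n]
    have hA_fin : ∀ k, (A k).Finite := by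
      intro k
      apply Set.Finite.subset (Set.finite_range
        (fun p : Fin (n + 1) → Fin n => W (fun r => p ⟨min r n, by omega⟩) n))
      rintro x ⟨v, -, -, rfl⟩
      refine ⟨fun i => v i.val, ?_⟩
      simp only
      refine Finset.sum_congr rfl fun r hr => ?_
      have hr' := Finset.mem_range.mp hr
      show β (v ((r + 1) ⊓ n)) (v (r ⊓ n)) = β (v (r + 1)) (v r)
      rw [min_eq_left (by omega : r + 1 ≤ n), min_eq_left (by omega : r ≤ n)]
    set α : Fin n → ℝ := fun k => sInf (A k) with hαdef
    have hmem : ∀ k, α k ∈ A k := fun k => (hA_ne k).csInf_mem (hA_fin k)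
    have hle : ∀ k, ∀ x ∈ A k, α k ≤ x := fun k x hx => csInf_le (hA_fin k).bddBelow hx
    refine ⟨α, fun j k => ?_⟩
    obtain ⟨v, hv0, hvn, hW⟩ := hmem j
    -- pigeonhole: a repeated vertex among v 0, …, v n
    obtain ⟨a, b, hab, hbn, hvab⟩ : ∃ a b : ℕ, a < b ∧ b ≤ n ∧ v a = v b := by
      obtain ⟨a', b', hne, heq⟩ := Fintype.exists_ne_map_eq_of_card_lt
        (fun r : Fin (n + 1) => v r.val) (by simp)
      rcases lt_or_gt_of_ne hne with hlt | hlt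
      · exact ⟨a'.val, b'.val, hlt, b'.is_le, heq⟩
      · exact ⟨b'.val, a'.val, hlt, a'.is_le, heq.symm⟩
    -- cycle sum is nonneg
    have hcyc : 0 ≤ ∑ r ∈ Finset.Ico a b, β (v (r + 1)) (v r) := by
      have h1 := h (b - a) (by omega) (fun s => v (b - s % (b - a)))
      have e2 : ∑ s ∈ Finset.range (b - a),
            β (v (b - s % (b - a))) (v (b - (s + 1) % (b - a) % (b - a)))
          = ∑ r ∈ Finset.Ico a b, β (v (r + 1)) (v r) := by
        rw [Finset.sum_Ico_eq_sum_range]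
        rw [← Finset.sum_range_reflect (fun s => β (v (a + s + 1)) (v (a + s))) (b - a)]
        refine Finset.sum_congr rfl fun s hs => ?_
        have hs' : s < b - a := Finset.mem_range.mp hs
        rw [Nat.mod_eq_of_lt hs']
        rcases Nat.lt_or_ge (s + 1) (b - a) with hlt | hge
        · rw [Nat.mod_eq_of_lt hlt, Nat.mod_eq_of_lt hlt]
          congr 2 <;> omega
        · have hsm : s + 1 = b - a := by omega
          rw [hsm, Nat.mod_self, Nat.zero_mod, Nat.sub_zero]
          have e3 : a + (b - a - 1 - s) + 1 = b - s := by omega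
          have e4 : a + (b - a - 1 - s) = a := by omega
          rw [e3, e4, hvab]
      rw [e2] at h1
      exact h1
    set t := n - (b - a) with htdef
    have hta : a ≤ t := by omega
    have htn : t < n := by omega
    -- the shortened-and-extended walk
    set u : ℕ → Fin n := fun r => if r < a then v r else if r ≤ t then v (r + (b - a)) else k
      with hudef
    have hu2 : ∀ r, a ≤ r → r ≤ t → u r = v (r + (b - a)) := by
      intro r h1 h2
      simp [hudef, Nat.not_lt.mpr h1, h2]
    have hu1 : ∀ r, r ≤ a → u r = v r := by
      intro r hr
      rcases Nat.lt_or_ge r a with h' | h'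
      · simp [hudef, h']
      · have hra : r = a := by omega
        rw [hra, hu2 a le_rfl hta, show a + (b - a) = b by omega]
        exact hvab.symm
    have hu3 : ∀ r, t < r → u r = k := by
      intro r hr
      have h1 : ¬ r < a := by omega
      have h2 : ¬ r ≤ t := by omega
      simp [hudef, h1, h2]
    have hu0 : u 0 = z := by rw [hu1 0 (Nat.zero_le a), hv0]
    have hun : u n = k := hu3 n htn
    -- compute the weight of u
    have hWu : W u n = (W v n - ∑ r ∈ Finset.Ico a b, β (v (r + 1)) (v r)) + β k j := by
      have split1 := Wsplit u t n htn.le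
      have part3 : ∑ r ∈ Finset.Ico t n, β (u (r + 1)) (u r) = β k j := by
        rw [Finset.sum_Ico_eq_sum_range]
        rw [Finset.sum_eq_single_of_mem 0 (Finset.mem_range.mpr (by omega))
          (fun s hs hs0 => by
            rw [hu3 (t + s + 1) (by omega), hu3 (t + s) (by omega), hβ])]
        simp only [Nat.add_zero]
        rw [hu3 (t + 1) (by omega), hu2 t hta le_rfl]
        have e6 : t + (b - a) = n := by omega
        rw [e6, hvn]
      have part12 : ∑ r ∈ Finset.range t, β (u (r + 1)) (u r)
          = W v n - ∑ r ∈ Finset.Ico a b, β (v (r + 1)) (v r) := by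
        have splitu : ∑ r ∈ Finset.range t, β (u (r + 1)) (u r)
            = (∑ r ∈ Finset.range a, β (u (r + 1)) (u r))
              + ∑ r ∈ Finset.Ico a t, β (u (r + 1)) (u r) := by
          rw [Finset.range_eq_Ico, ← Finset.sum_Ico_consecutive _ (Nat.zero_le a) hta,
            ← Finset.range_eq_Ico]
        have splitv : W v n = (∑ r ∈ Finset.range a, β (v (r + 1)) (v r))
            + ((∑ r ∈ Finset.Ico a b, β (v (r + 1)) (v r))
            + ∑ r ∈ Finset.Ico b n, β (v (r + 1)) (v r)) := by
          rw [Wsplit v a n (by omega),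
            ← Finset.sum_Ico_consecutive _ (le_of_lt hab) hbn]
        have e4 : ∑ r ∈ Finset.range a, β (u (r + 1)) (u r)
            = ∑ r ∈ Finset.range a, β (v (r + 1)) (v r) := by
          refine Finset.sum_congr rfl fun r hr => ?_
          have hr' := Finset.mem_range.mp hr
          rw [hu1 r (by omega), hu1 (r + 1) (by omega)]
        have e5 : ∑ r ∈ Finset.Ico a t, β (u (r + 1)) (u r)
            = ∑ r ∈ Finset.Ico b n, β (v (r + 1)) (v r) := by
          rw [Finset.sum_Ico_eq_sum_range, Finset.sum_Ico_eq_sum_range]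
          refine Finset.sum_congr (by rw [show t - a = n - b by omega]) fun s hs => ?_
          have hs' := Finset.mem_range.mp hs
          rw [hu2 (a + s) (by omega) (by omega), hu2 (a + s + 1) (by omega) (by omega)]
          congr 2 <;> omega
        rw [splitu, e4, e5, splitv]
        ring
      rw [split1, part12, part3]
    have hαk : α k ≤ W u n := hle k _ ⟨u, hu0, hun, rfl⟩
    rw [hWu, hW] at hαk
    linarith
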